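/- Let G and X be positive semidefinite operators on a finite-dimensional complex Hilbert space, and define t(a) = Tr(G · P_>(aG − X)) and t⁺(a) = Tr(G · P_≥(aG − X)) for a ≥ 0. If a < a' then t⁺(a) ≤ t(a'); consequently t(a) ≤ t⁺(a) ≤ t(a') ≤ t⁺(a') whenever a < a', so both t and t⁺ are monotonically increasing in a. -/

import Mathlib

open Matrix
open scoped ComplexOrder

/-- Positive part `A₊` of a Hermitian matrix (junk value `0` on non-Hermitian input). -/
noncomputable def matPosPart {n : ℕ} (A : Matrix (Fin n) (Fin n) ℂ) : Matrix (Fin n) (Fin n) ℂ :=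
  if hA : A.IsHermitian then
    (hA.eigenvectorUnitary : Matrix (Fin n) (Fin n) ℂ) *
      Matrix.diagonal (fun i => if 0 < hA.eigenvalues i then (hA.eigenvalues i : ℂ) else 0) *
      star (hA.eigenvectorUnitary : Matrix (Fin n) (Fin n) ℂ)
  else 0

/-- Projection `P₍>₎(A)` onto the span of eigenvectors of positive eigenvalues. -/
noncomputable def matProjPos {n : ℕ} (A : Matrix (Fin n) (Fin n) ℂ) : Matrix (Fin n) (Fin n) ℂ :=
  if hA : A.IsHermitian then
    (hA.eigenvectorUnitary : Matrix (Fin n) (Fin n) ℂ) *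
      Matrix.diagonal (fun i => if 0 < hA.eigenvalues i then (1 : ℂ) else 0) *
      star (hA.eigenvectorUnitary : Matrix (Fin n) (Fin n) ℂ)
  else 0

/-- Projection `P₍≥₎(A)` onto the span of eigenvectors of nonnegative eigenvalues. -/
noncomputable def matProjNonneg {n : ℕ} (A : Matrix (Fin n) (Fin n) ℂ) : Matrix (Fin n) (Fin n) ℂ :=
  if hA : A.IsHermitian then
    (hA.eigenvectorUnitary : Matrix (Fin n) (Fin n) ℂ) *
      Matrix.diagonal (fun i => if 0 ≤ hA.eigenvalues i then (1 : ℂ) else 0) *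
      star (hA.eigenvectorUnitary : Matrix (Fin n) (Fin n) ℂ)
  else 0

section Helpers

variable {n : ℕ}

lemma psd_diag_nonneg {M : Matrix (Fin n) (Fin n) ℂ} (hM : M.PosSemidef) (i : Fin n) :
    0 ≤ M i i := by
  have := hM.dotProduct_mulVec_nonneg (Pi.single i 1)
  simpa [dotProduct, Matrix.mulVec, Pi.single_apply, Finset.sum_ite_eq,
    mul_comm] using this

lemma psd_trace_re_nonneg {M : Matrix (Fin n) (Fin n) ℂ} (hM : M.PosSemidef) :
    0 ≤ M.trace.re := by
  rw [Matrix.trace, Complex.re_sum]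
  exact Finset.sum_nonneg fun i _ => (Complex.le_def.mp (psd_diag_nonneg hM i)).1

/-- Trace of a product of PSD matrices has nonnegative real part. -/
lemma trace_mul_psd_re_nonneg {G B : Matrix (Fin n) (Fin n) ℂ}
    (hG : G.PosSemidef) (hB : B.PosSemidef) : 0 ≤ (G * B).trace.re := by
  open scoped MatrixOrder Matrix.Norms.L2Operator in
  obtain ⟨C, rfl⟩ := CStarAlgebra.nonneg_iff_eq_star_mul_self.mp hB.nonneg
  rw [← mul_assoc, Matrix.trace_mul_comm, ← mul_assoc]
  exact psd_trace_re_nonneg (hG.mul_mul_conjTranspose_same C)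

lemma conj_trace (U : Matrix.unitaryGroup (Fin n) ℂ) (d : Fin n → ℂ) :
    ((U : Matrix (Fin n) (Fin n) ℂ) * Matrix.diagonal d *
      star (U : Matrix (Fin n) (Fin n) ℂ)).trace = ∑ i, d i := by
  rw [Matrix.trace_mul_cycle, U.2.1, one_mul, Matrix.trace_diagonal]

lemma conj_psd (U : Matrix.unitaryGroup (Fin n) ℂ) {d : Fin n → ℂ} (hd : 0 ≤ d) :
    (((U : Matrix (Fin n) (Fin n) ℂ) * Matrix.diagonal d *
      star (U : Matrix (Fin n) (Fin n) ℂ))).PosSemidef := by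
  have h := (Matrix.PosSemidef.diagonal hd).mul_mul_conjTranspose_same
      (U : Matrix (Fin n) (Fin n) ℂ)
  rwa [← Matrix.star_eq_conjTranspose] at h

lemma one_sub_conj (U : Matrix.unitaryGroup (Fin n) ℂ) (d : Fin n → ℂ) :
    1 - ((U : Matrix (Fin n) (Fin n) ℂ) * Matrix.diagonal d *
      star (U : Matrix (Fin n) (Fin n) ℂ)) =
    (U : Matrix (Fin n) (Fin n) ℂ) * Matrix.diagonal (fun i => 1 - d i) *
      star (U : Matrix (Fin n) (Fin n) ℂ) := by
  have : Matrix.diagonal (fun i : Fin n => (1 : ℂ) - d i) = 1 - Matrix.diagonal d := by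
    rw [← Matrix.diagonal_one, Matrix.diagonal_sub]
  rw [this, Matrix.mul_sub, Matrix.sub_mul, mul_one, U.2.2]

lemma matPosPart_def {A : Matrix (Fin n) (Fin n) ℂ} (hA : A.IsHermitian) :
    matPosPart A = (hA.eigenvectorUnitary : Matrix (Fin n) (Fin n) ℂ) *
      Matrix.diagonal (fun i => if 0 < hA.eigenvalues i then (hA.eigenvalues i : ℂ) else 0) *
      star (hA.eigenvectorUnitary : Matrix (Fin n) (Fin n) ℂ) := by
  rw [matPosPart, dif_pos hA]

lemma mul_matProjPos {A : Matrix (Fin n) (Fin n) ℂ} (hA : A.IsHermitian) :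
    A * matProjPos A = matPosPart A := by
  have hAU : A * (hA.eigenvectorUnitary : Matrix (Fin n) (Fin n) ℂ) =
      (hA.eigenvectorUnitary : Matrix (Fin n) (Fin n) ℂ) *
        Matrix.diagonal (RCLike.ofReal ∘ hA.eigenvalues) := by
    have h := congrArg
      (fun M : Matrix (Fin n) (Fin n) ℂ =>
        M * (hA.eigenvectorUnitary : Matrix (Fin n) (Fin n) ℂ)) hA.spectral_theorem
    simpa [mul_assoc, hA.eigenvectorUnitary.2.1] using h
  rw [matProjPos, dif_pos hA, matPosPart_def hA, ← mul_assoc, ← mul_assoc, hAU,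
    mul_assoc _ (Matrix.diagonal (RCLike.ofReal ∘ hA.eigenvalues)),
    Matrix.diagonal_mul_diagonal]
  have hfg : (fun i => (RCLike.ofReal ∘ hA.eigenvalues) i *
      if 0 < hA.eigenvalues i then (1 : ℂ) else 0) =
      (fun i => if 0 < hA.eigenvalues i then (hA.eigenvalues i : ℂ) else 0) := by
    funext i
    by_cases h : 0 < hA.eigenvalues i <;> simp [h, Function.comp]
  rw [hfg]

lemma mul_matProjNonneg {A : Matrix (Fin n) (Fin n) ℂ} (hA : A.IsHermitian) :
    A * matProjNonneg A = matPosPart A := by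
  have hAU : A * (hA.eigenvectorUnitary : Matrix (Fin n) (Fin n) ℂ) =
      (hA.eigenvectorUnitary : Matrix (Fin n) (Fin n) ℂ) *
        Matrix.diagonal (RCLike.ofReal ∘ hA.eigenvalues) := by
    have h := congrArg
      (fun M : Matrix (Fin n) (Fin n) ℂ =>
        M * (hA.eigenvectorUnitary : Matrix (Fin n) (Fin n) ℂ)) hA.spectral_theorem
    simpa [mul_assoc, hA.eigenvectorUnitary.2.1] using h
  rw [matProjNonneg, dif_pos hA, matPosPart_def hA, ← mul_assoc, ← mul_assoc, hAU,
    mul_assoc _ (Matrix.diagonal (RCLike.ofReal ∘ hA.eigenvalues)),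
    Matrix.diagonal_mul_diagonal]
  have hfg : (fun i => (RCLike.ofReal ∘ hA.eigenvalues) i *
      if 0 ≤ hA.eigenvalues i then (1 : ℂ) else 0) =
      (fun i => if 0 < hA.eigenvalues i then (hA.eigenvalues i : ℂ) else 0) := by
    funext i
    rcases lt_trichotomy (hA.eigenvalues i) 0 with h | h | h
    · simp [h.not_gt, not_le.mpr h, Function.comp]
    · simp [h, Function.comp]
    · simp [h, h.le, Function.comp]
  rw [hfg]

lemma matProjPos_psd {A : Matrix (Fin n) (Fin n) ℂ} (hA : A.IsHermitian) :
    (matProjPos A).PosSemidef := by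
  rw [matProjPos, dif_pos hA]
  refine conj_psd _ fun i => ?_
  dsimp only
  split_ifs <;> simp

lemma matProjNonneg_psd {A : Matrix (Fin n) (Fin n) ℂ} (hA : A.IsHermitian) :
    (matProjNonneg A).PosSemidef := by
  rw [matProjNonneg, dif_pos hA]
  refine conj_psd _ fun i => ?_
  dsimp only
  split_ifs <;> simp

lemma one_sub_matProjPos_psd {A : Matrix (Fin n) (Fin n) ℂ} (hA : A.IsHermitian) :
    (1 - matProjPos A).PosSemidef := by
  rw [matProjPos, dif_pos hA, one_sub_conj]
  refine conj_psd _ fun i => ?_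
  dsimp only
  split_ifs <;> simp

lemma one_sub_matProjNonneg_psd {A : Matrix (Fin n) (Fin n) ℂ} (hA : A.IsHermitian) :
    (1 - matProjNonneg A).PosSemidef := by
  rw [matProjNonneg, dif_pos hA, one_sub_conj]
  refine conj_psd _ fun i => ?_
  dsimp only
  split_ifs <;> simp

lemma matProjNonneg_sub_matProjPos_psd {A : Matrix (Fin n) (Fin n) ℂ} (hA : A.IsHermitian) :
    (matProjNonneg A - matProjPos A).PosSemidef := by
  rw [matProjNonneg, matProjPos, dif_pos hA, dif_pos hA, ← Matrix.sub_mul, ← Matrix.mul_sub,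
    Matrix.diagonal_sub]
  refine conj_psd _ fun i => ?_
  dsimp only
  rcases lt_trichotomy (hA.eigenvalues i) 0 with h | h | h
  · simp [h.not_gt, not_le.mpr h]
  · simp [h]
  · simp [h, h.le]

lemma matPosPart_trace_re {A : Matrix (Fin n) (Fin n) ℂ} (hA : A.IsHermitian) :
    (matPosPart A).trace.re = ∑ i, if 0 < hA.eigenvalues i then hA.eigenvalues i else 0 := by
  rw [matPosPart_def hA, conj_trace, Complex.re_sum]
  refine Finset.sum_congr rfl fun i _ => ?_
  split_ifs <;> simp

/-- Key lemma: for Hermitian `A` and `0 ≤ B ≤ 1`, `Re Tr(A B) ≤ Re Tr(A₊)`. -/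
lemma trace_mul_le_posPart {A B : Matrix (Fin n) (Fin n) ℂ} (hA : A.IsHermitian)
    (hB : B.PosSemidef) (hB1 : (1 - B).PosSemidef) :
    (A * B).trace.re ≤ (matPosPart A).trace.re := by
  set U := hA.eigenvectorUnitary with hU
  set C : Matrix (Fin n) (Fin n) ℂ :=
    star (U : Matrix (Fin n) (Fin n) ℂ) * B * (U : Matrix (Fin n) (Fin n) ℂ) with hC
  have hCpsd : C.PosSemidef := by
    have h := hB.mul_mul_conjTranspose_same (star (U : Matrix (Fin n) (Fin n) ℂ))
    rwa [← Matrix.star_eq_conjTranspose, star_star] at h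
  have hC1psd : (1 - C).PosSemidef := by
    have h := hB1.mul_mul_conjTranspose_same (star (U : Matrix (Fin n) (Fin n) ℂ))
    rwa [← Matrix.star_eq_conjTranspose, star_star, Matrix.mul_sub, mul_one,
      Matrix.sub_mul, U.2.1, ← hC] at h
  have key : (A * B).trace = ∑ i, (hA.eigenvalues i : ℂ) * C i i := by
    have h2 : (A * B).trace = ((U : Matrix (Fin n) (Fin n) ℂ) *
        Matrix.diagonal (RCLike.ofReal ∘ hA.eigenvalues) *
        star (U : Matrix (Fin n) (Fin n) ℂ) * B).trace :=
      congrArg (fun M : Matrix (Fin n) (Fin n) ℂ => (M * B).trace) hA.spectral_theorem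
    rw [h2, Matrix.trace_mul_cycle, Matrix.trace_mul_cycle, ← mul_assoc,
      Matrix.trace_mul_comm, ← hC]
    simp [Matrix.trace, Matrix.diag, Matrix.diagonal_mul, Function.comp]
  have h0 : ∀ i, 0 ≤ (C i i).re := fun i => (Complex.le_def.mp (psd_diag_nonneg hCpsd i)).1
  have h1 : ∀ i, (C i i).re ≤ 1 := by
    intro i
    have h := (Complex.le_def.mp (psd_diag_nonneg hC1psd i)).1
    rw [Matrix.sub_apply, Matrix.one_apply_eq] at h
    simpa using sub_nonneg.mp (by simpa using h)
  rw [key, Complex.re_sum, matPosPart_trace_re hA]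
  refine Finset.sum_le_sum fun i _ => ?_
  rw [Complex.re_ofReal_mul]
  by_cases h : 0 < hA.eigenvalues i
  · simp only [if_pos h]
    calc hA.eigenvalues i * (C i i).re ≤ hA.eigenvalues i * 1 :=
        mul_le_mul_of_nonneg_left (h1 i) h.le
      _ = hA.eigenvalues i := mul_one _
  · simp only [if_neg h]
    exact mul_nonpos_of_nonpos_of_nonneg (not_lt.mp h) (h0 i)

end Helpers

/-- With `t(a) = Tr(G·P₍>₎(aG − X))` and `t⁺(a) = Tr(G·P₍≥₎(aG − X))`,
if `a < a'` then `t⁺(a) ≤ t(a')`; consequently `t(a) ≤ t⁺(a) ≤ t(a') ≤ t⁺(a')`,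
so both are monotonically increasing. -/
theorem stmt_13 {n : ℕ} (G X : Matrix (Fin n) (Fin n) ℂ)
    (hG : G.PosSemidef) (hX : X.PosSemidef)
    (t tplus : ℝ → ℝ)
    (ht : ∀ a : ℝ, t a = (G * matProjPos ((a : ℂ) • G - X)).trace.re)
    (htplus : ∀ a : ℝ, tplus a = (G * matProjNonneg ((a : ℂ) • G - X)).trace.re)
    (a a' : ℝ) (ha : 0 ≤ a) (haa' : a < a') :
    tplus a ≤ t a' ∧ t a ≤ tplus a ∧ t a' ≤ tplus a' ∧
    t a ≤ t a' ∧ tplus a ≤ tplus a' := by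
  have hHerm : ∀ b : ℝ, ((b : ℂ) • G - X).IsHermitian := by
    intro b
    have h1 : ((b : ℂ) • G).IsHermitian := by
      unfold Matrix.IsHermitian
      rw [Matrix.conjTranspose_smul, hG.1]
      norm_num
    exact h1.sub hX.1
  -- monotonicity t ≤ tplus at every point
  have hmono : ∀ b : ℝ, t b ≤ tplus b := by
    intro b
    rw [ht, htplus]
    have h1 := trace_mul_psd_re_nonneg hG (matProjNonneg_sub_matProjPos_psd (hHerm b))
    rw [Matrix.mul_sub, Matrix.trace_sub, Complex.sub_re] at h1
    linarith
  set A : Matrix (Fin n) (Fin n) ℂ := (a : ℂ) • G - X with hAdef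
  set A' : Matrix (Fin n) (Fin n) ℂ := (a' : ℂ) • G - X with hA'def
  have hA : A.IsHermitian := hHerm a
  have hA' : A'.IsHermitian := hHerm a'
  have hdiff : A' - A = ((a' - a : ℝ) : ℂ) • G := by
    rw [hAdef, hA'def, sub_sub_sub_cancel_right, ← sub_smul, Complex.ofReal_sub]
  have tr_sub : ∀ (M N P : Matrix (Fin n) (Fin n) ℂ),
      ((M - N) * P).trace.re = (M * P).trace.re - (N * P).trace.re := by
    intro M N P
    rw [Matrix.sub_mul, Matrix.trace_sub, Complex.sub_re]
  have smul_trace_re : ∀ (M : Matrix (Fin n) (Fin n) ℂ),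
      ((((a' - a : ℝ) : ℂ) • G) * M).trace.re = (a' - a) * (G * M).trace.re := by
    intro M
    rw [smul_mul_assoc, Matrix.trace_smul, smul_eq_mul, Complex.re_ofReal_mul]
  have key1 : (A' * matProjNonneg A).trace.re - (matPosPart A).trace.re
      = (a' - a) * tplus a := by
    calc (A' * matProjNonneg A).trace.re - (matPosPart A).trace.re
        = (A' * matProjNonneg A).trace.re - (A * matProjNonneg A).trace.re := by
          rw [mul_matProjNonneg hA]
      _ = ((A' - A) * matProjNonneg A).trace.re := (tr_sub A' A _).symm
      _ = (a' - a) * (G * matProjNonneg A).trace.re := by rw [hdiff, smul_trace_re]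
      _ = (a' - a) * tplus a := by rw [htplus]
  have key2 : (matPosPart A').trace.re - (A * matProjPos A').trace.re
      = (a' - a) * t a' := by
    calc (matPosPart A').trace.re - (A * matProjPos A').trace.re
        = (A' * matProjPos A').trace.re - (A * matProjPos A').trace.re := by
          rw [mul_matProjPos hA']
      _ = ((A' - A) * matProjPos A').trace.re := (tr_sub A' A _).symm
      _ = (a' - a) * (G * matProjPos A').trace.re := by rw [hdiff, smul_trace_re]
      _ = (a' - a) * t a' := by rw [ht]
  have b1 : (A' * matProjNonneg A).trace.re ≤ (matPosPart A').trace.re :=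
    trace_mul_le_posPart hA' (matProjNonneg_psd hA) (one_sub_matProjNonneg_psd hA)
  have b2 : (A * matProjPos A').trace.re ≤ (matPosPart A).trace.re :=
    trace_mul_le_posPart hA (matProjPos_psd hA') (one_sub_matProjPos_psd hA')
  have hc : (0 : ℝ) < a' - a := sub_pos.mpr haa'
  have hmul : (a' - a) * tplus a ≤ (a' - a) * t a' := by linarith
  have h1 : tplus a ≤ t a' := le_of_mul_le_mul_left hmul hc
  exact ⟨h1, hmono a, hmono a', (hmono a).trans h1, h1.trans (hmono a')⟩
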